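/- Let γ ∈ (1,2] and let κ_a(λ,μ) be as above. Then for all a, c, λ, μ ∈ (0,∞): c^{1/(γ-1)} κ_a(c^{-γ/(γ-1)} λ, c^{-1/(γ-1)} μ) = κ_{a/c}(λ, μ). -/

import Mathlib

open Real

theorem stmt_3
    (γ : ℝ) (hγ : 1 < γ) (hγ2 : γ ≤ 2)
    (κ : ℝ → ℝ → ℝ → ℝ)
    (hinit : ∀ lam μ : ℝ, 0 ≤ lam → 0 ≤ μ → κ 0 lam μ = μ)
    (hnonneg : ∀ a lam μ : ℝ, 0 ≤ a → 0 ≤ lam → 0 ≤ μ → 0 ≤ κ a lam μ)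
    (hode : ∀ lam μ : ℝ, 0 ≤ lam → 0 ≤ μ → ∀ a : ℝ, 0 ≤ a →
      HasDerivAt (fun t => κ t lam μ) (lam - κ a lam μ ^ γ) a) :
    ∀ a c lam μ : ℝ, 0 < a → 0 < c → 0 < lam → 0 < μ →
      c ^ (1 / (γ - 1)) *
        κ a (c ^ (-(γ / (γ - 1))) * lam) (c ^ (-(1 / (γ - 1))) * μ)
      = κ (a / c) lam μ := by
  intro a c lam μ ha hc hlam hμ
  have hγ1 : 0 < γ - 1 := by linarith
  set β : ℝ := 1 / (γ - 1) with hβ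
  have hexp : γ * β = β + 1 := by
    rw [hβ]; field_simp; ring
  have hgb : γ / (γ - 1) = γ * β := by rw [hβ]; field_simp
  set lam' : ℝ := c ^ (-(γ / (γ - 1))) * lam with hlam'
  set μ' : ℝ := c ^ (-(1 / (γ - 1))) * μ with hμ'
  have hlam'pos : 0 < lam' := mul_pos (rpow_pos_of_pos hc _) hlam
  have hμ'pos : 0 < μ' := mul_pos (rpow_pos_of_pos hc _) hμ
  have hcβ : (0:ℝ) < c ^ β := rpow_pos_of_pos hc _
  set b : ℝ := a / c with hb
  have hbpos : 0 < b := div_pos ha hc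
  set f : ℝ → ℝ := fun t => c ^ β * κ (c * t) lam' μ' with hf
  set g : ℝ → ℝ := fun t => κ t lam μ with hg
  -- continuity
  have hcontg : ContinuousOn g (Set.Icc 0 b) := fun t ht =>
    ((hode lam μ hlam.le hμ.le t ht.1).continuousAt).continuousWithinAt
  have hcontf : ContinuousOn f (Set.Icc 0 b) := by
    apply ContinuousOn.mul continuousOn_const
    intro t ht
    have h1 : ContinuousAt (fun s => κ s lam' μ') (c * t) :=
      (hode lam' μ' hlam'pos.le hμ'pos.le (c * t) (mul_nonneg hc.le ht.1)).continuousAt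
    exact (h1.comp ((continuous_const.mul continuous_id).continuousAt)).continuousWithinAt
  -- derivative of f
  have hf' : ∀ t : ℝ, 0 ≤ t → HasDerivAt f (lam - f t ^ γ) t := by
    intro t ht
    have h1 := hode lam' μ' hlam'pos.le hμ'pos.le (c * t) (mul_nonneg hc.le ht)
    have h2 : HasDerivAt (fun s : ℝ => c * s) c t := by
      simpa using (hasDerivAt_id t).const_mul c
    have h3 : HasDerivAt (fun s => κ (c * s) lam' μ')
        ((lam' - κ (c * t) lam' μ' ^ γ) * c) t := h1.comp t h2
    have h4 := h3.const_mul (c ^ β)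
    have key : c ^ β * ((lam' - κ (c * t) lam' μ' ^ γ) * c) = lam - f t ^ γ := by
      have hc1 : c ^ β * c = c ^ (γ * β) := by
        rw [hexp, rpow_add hc, rpow_one]
      have hκnn : 0 ≤ κ (c * t) lam' μ' :=
        hnonneg _ _ _ (mul_nonneg hc.le ht) hlam'pos.le hμ'pos.le
      have hpow : (c ^ β * κ (c * t) lam' μ') ^ γ
          = c ^ (γ * β) * κ (c * t) lam' μ' ^ γ := by
        rw [mul_rpow hcβ.le hκnn, ← Real.rpow_mul hc.le, mul_comm β γ]
      have hlameq : c ^ (γ * β) * lam' = lam := by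
        rw [hlam', hgb, ← mul_assoc, ← rpow_add hc]
        simp
      calc c ^ β * ((lam' - κ (c * t) lam' μ' ^ γ) * c)
          = c ^ β * c * lam' - c ^ β * c * κ (c * t) lam' μ' ^ γ := by ring
        _ = lam - f t ^ γ := by
            rw [hc1, hlameq, hf, hpow]
    rw [← key]
    exact h4
  -- derivative of g
  have hg' : ∀ t : ℝ, 0 ≤ t → HasDerivAt g (lam - g t ^ γ) t := fun t ht =>
    hode lam μ hlam.le hμ.le t ht
  -- bounds
  obtain ⟨Cf, hCf⟩ := (isCompact_Icc : IsCompact (Set.Icc (0:ℝ) b)).exists_bound_of_continuousOn hcontf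
  obtain ⟨Cg, hCg⟩ := (isCompact_Icc : IsCompact (Set.Icc (0:ℝ) b)).exists_bound_of_continuousOn hcontg
  set M : ℝ := max Cf Cg with hM
  have hMnn : 0 ≤ M := le_trans (norm_nonneg (f 0)) ((hCf 0 ⟨le_refl _, hbpos.le⟩).trans (le_max_left _ _))
  have hfmem : ∀ t ∈ Set.Icc (0:ℝ) b, f t ∈ Set.Icc (0:ℝ) M := by
    intro t ht
    refine ⟨mul_nonneg hcβ.le (hnonneg _ _ _ (mul_nonneg hc.le ht.1) hlam'pos.le hμ'pos.le), ?_⟩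
    exact le_trans (le_abs_self _) ((hCf t ht).trans (le_max_left _ _))
  have hgmem : ∀ t ∈ Set.Icc (0:ℝ) b, g t ∈ Set.Icc (0:ℝ) M := by
    intro t ht
    refine ⟨hnonneg _ _ _ ht.1 hlam.le hμ.le, ?_⟩
    exact le_trans (le_abs_self _) ((hCg t ht).trans (le_max_right _ _))
  -- Lipschitz
  set K : NNReal := Real.toNNReal (γ * M ^ (γ - 1)) with hK
  have hlip : ∀ t : ℝ, LipschitzOnWith K (fun x => lam - x ^ γ) (Set.Icc (0:ℝ) M) := by
    intro _
    apply (convex_Icc (0:ℝ) M).lipschitzOnWith_of_nnnorm_hasDerivWithin_le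
      (f' := fun x => -(γ * x ^ (γ - 1)))
    · intro x hx
      exact ((Real.hasDerivAt_rpow_const (Or.inr hγ.le)).const_sub lam).hasDerivWithinAt
    · intro x hx
      rw [← NNReal.coe_le_coe, hK, Real.coe_toNNReal _ (mul_nonneg (by linarith) (Real.rpow_nonneg hMnn _)), coe_nnnorm,
        Real.norm_eq_abs, abs_neg, abs_of_nonneg (mul_nonneg (by linarith) (Real.rpow_nonneg hx.1 _))]
      exact mul_le_mul_of_nonneg_left
        (Real.rpow_le_rpow hx.1 hx.2 (by linarith)) (by linarith)
  -- uniqueness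
  have huniq : Set.EqOn f g (Set.Icc 0 b) := by
    apply ODE_solution_unique_of_mem_Icc_right (v := fun _ x => lam - x ^ γ) (fun t _ => hlip t) hcontf
      (fun t ht => ((hf' t ht.1).hasDerivWithinAt)) (fun t ht => hfmem t (Set.Ico_subset_Icc_self ht))
      hcontg (fun t ht => ((hg' t ht.1).hasDerivWithinAt)) (fun t ht => hgmem t (Set.Ico_subset_Icc_self ht))
    -- initial condition
    show f 0 = g 0
    rw [hf, hg]
    simp only [mul_zero]
    rw [hinit lam' μ' hlam'pos.le hμ'pos.le, hinit lam μ hlam.le hμ.le, hμ',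
      ← mul_assoc, ← rpow_add hc]
    simp [hβ]
  have := huniq ⟨hbpos.le, le_refl b⟩
  rw [hf, hg] at this
  simpa [hb, mul_div_cancel₀ a hc.ne', hβ] using this
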